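/- Let φ, Σ, Θ, μ, p, Π, E, Q, A : ℝ → ℝ be differentiable functions on an interval I containing t₀, write s = Σ − (2/3)Θ, suppose s is continuous on I, and suppose on all of I: (i) φ′ = −s·(A − φ/2) + Q; (ii) s′ = −A·φ + (1/2)·s² + (μ + 3p)/3 − E + Π/2; (iii) (E − μ/3 + Π/2)′ = (3E/2 + Π/4)·s + (1/2)·φ·Q − (1/2)·(μ + p)·s; and (iv) φ ≠ 0 on I and Q = (s/φ)·((μ + 3p)/3 + Π/2 − E) on I. Define C = φ² − s² + (1/2)·(E − μ/3 + Π/2). If C(t₀) = 0, then C(t) = 0 for all t in I. (A Buchdahl star expelling exactly this heat flux remains in Virial equilibrium for all time and never forms a black hole.) -/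

import Mathlib

/-- A Buchdahl star expelling exactly the heat flux
Q = (s/φ)·((μ + 3p)/3 + Π/2 − E) remains in Virial equilibrium (C = 0) for all
time in the interval I, hence never forms a black hole. -/
theorem virial_equilibrium_preserved
    (φ Sg Θ μ p Pa E Q A : ℝ → ℝ) (I : Set ℝ) (t₀ : ℝ)
    (hI : I.OrdConnected) (ht₀ : t₀ ∈ I)
    (hφdiff : DifferentiableOn ℝ φ I) (hSgdiff : DifferentiableOn ℝ Sg I)
    (hΘdiff : DifferentiableOn ℝ Θ I) (hμdiff : DifferentiableOn ℝ μ I)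
    (hpdiff : DifferentiableOn ℝ p I) (hPadiff : DifferentiableOn ℝ Pa I)
    (hEdiff : DifferentiableOn ℝ E I) (hQdiff : DifferentiableOn ℝ Q I)
    (hAdiff : DifferentiableOn ℝ A I)
    (s : ℝ → ℝ) (hs : s = fun t => Sg t - (2/3) * Θ t)
    (hscont : ContinuousOn s I)
    (hφdot : ∀ t ∈ I, HasDerivAt φ (-s t * (A t - φ t / 2) + Q t) t)
    (hsdot : ∀ t ∈ I, HasDerivAt s
      (-A t * φ t + (1/2) * (s t)^2 + (μ t + 3 * p t) / 3 - E t + Pa t / 2) t)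
    (hBianchi : ∀ t ∈ I, HasDerivAt (fun t => E t - μ t / 3 + Pa t / 2)
      ((3 * E t / 2 + Pa t / 4) * s t + (1/2) * φ t * Q t
        - (1/2) * (μ t + p t) * s t) t)
    (hφne : ∀ t ∈ I, φ t ≠ 0)
    (hQ : ∀ t ∈ I, Q t = (s t / φ t) * ((μ t + 3 * p t) / 3 + Pa t / 2 - E t))
    (C : ℝ → ℝ)
    (hC : C = fun t => (φ t)^2 - (s t)^2 + (1/2) * (E t - μ t / 3 + Pa t / 2))
    (hC0 : C t₀ = 0) :
    ∀ t ∈ I, C t = 0 := by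
  -- Step 1: C satisfies the linear ODE C' = s·C on I.
  have hCd : ∀ u ∈ I, HasDerivAt C (s u * C u) u := by
    intro u hu
    have h1 := hφdot u hu
    have h2 := hsdot u hu
    have h3 := hBianchi u hu
    have hd := ((h1.pow 2).sub (h2.pow 2)).add (HasDerivAt.const_mul ((1:ℝ)/2) h3)
    rw [hC]
    convert hd using 1
    · rfl
    · rfl
    · rfl
    have hφ0 := hφne u hu
    rw [hQ u hu]
    push_cast
    field_simp
    ring
  intro t ht
  rcases le_total t₀ t with hle | hle
  · -- t₀ ≤ t
    have hsub : Set.Icc t₀ t ⊆ I := hI.out ht₀ ht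
    obtain ⟨K, hK⟩ := (isCompact_Icc (a := t₀) (b := t)).exists_bound_of_continuousOn
      (hscont.mono hsub)
    set M : ℝ := max K 0 with hM
    have hM0 : 0 ≤ M := le_max_right _ _
    set c : ℝ → ℝ := fun u => max (-M) (min M (s u)) with hcdef
    have hcbd : ∀ u, |c u| ≤ M := by
      intro u
      rw [abs_le]
      constructor
      · exact le_max_left _ _
      · exact max_le (neg_le_self hM0) (min_le_left _ _)
    have hcs : ∀ u ∈ Set.Icc t₀ t, c u = s u := by
      intro u hu
      have h := hK u hu
      rw [Real.norm_eq_abs, abs_le] at h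
      have h1 : s u ≤ M := h.2.trans (le_max_left _ _)
      have h2 : -M ≤ s u := by
        have : -M ≤ -K := neg_le_neg (le_max_left _ _)
        linarith [h.1]
      simp [hcdef, min_eq_right h1, max_eq_right h2]
    have hlip : ∀ u : ℝ, LipschitzOnWith ⟨M, hM0⟩ (fun x : ℝ => c u * x) Set.univ := by
      intro u
      apply LipschitzWith.lipschitzOnWith
      apply LipschitzWith.of_dist_le_mul
      intro x y
      rw [Real.dist_eq, Real.dist_eq, ← mul_sub, abs_mul]
      exact mul_le_mul_of_nonneg_right (hcbd u) (abs_nonneg _)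
    have hCcont : ContinuousOn C (Set.Icc t₀ t) :=
      fun u hu => ((hCd u (hsub hu)).continuousAt).continuousWithinAt
    have := ODE_solution_unique_of_mem_Icc_right (v := fun u x => c u * x)
      (s := fun _ => (Set.univ : Set ℝ)) (K := ⟨M, hM0⟩) (fun u _ => hlip u) hCcont
      (fun u hu => by
        show HasDerivWithinAt C (c u * C u) (Set.Ici u) u
        rw [hcs u (Set.Ico_subset_Icc_self hu)]
        exact (hCd u (hsub (Set.Ico_subset_Icc_self hu))).hasDerivWithinAt)
      (fun _ _ => Set.mem_univ _)
      (continuousOn_const (c := (0:ℝ)))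
      (fun u hu => by simpa using (hasDerivWithinAt_const u (Set.Ici u) (0:ℝ)))
      (fun _ _ => Set.mem_univ _)
      (by simpa using hC0)
    have := this (Set.right_mem_Icc.mpr hle)
    simpa using this
  · -- t ≤ t₀
    have hsub : Set.Icc t t₀ ⊆ I := hI.out ht ht₀
    obtain ⟨K, hK⟩ := (isCompact_Icc (a := t) (b := t₀)).exists_bound_of_continuousOn
      (hscont.mono hsub)
    set M : ℝ := max K 0 with hM
    have hM0 : 0 ≤ M := le_max_right _ _
    set c : ℝ → ℝ := fun u => max (-M) (min M (s u)) with hcdef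
    have hcbd : ∀ u, |c u| ≤ M := by
      intro u
      rw [abs_le]
      constructor
      · exact le_max_left _ _
      · exact max_le (neg_le_self hM0) (min_le_left _ _)
    have hcs : ∀ u ∈ Set.Icc t t₀, c u = s u := by
      intro u hu
      have h := hK u hu
      rw [Real.norm_eq_abs, abs_le] at h
      have h1 : s u ≤ M := h.2.trans (le_max_left _ _)
      have h2 : -M ≤ s u := by
        have : -M ≤ -K := neg_le_neg (le_max_left _ _)
        linarith [h.1]
      simp [hcdef, min_eq_right h1, max_eq_right h2]
    have hlip : ∀ u : ℝ, LipschitzOnWith ⟨M, hM0⟩ (fun x : ℝ => c u * x) Set.univ := by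
      intro u
      apply LipschitzWith.lipschitzOnWith
      apply LipschitzWith.of_dist_le_mul
      intro x y
      rw [Real.dist_eq, Real.dist_eq, ← mul_sub, abs_mul]
      exact mul_le_mul_of_nonneg_right (hcbd u) (abs_nonneg _)
    have hCcont : ContinuousOn C (Set.Icc t t₀) :=
      fun u hu => ((hCd u (hsub hu)).continuousAt).continuousWithinAt
    have := ODE_solution_unique_of_mem_Icc_left (v := fun u x => c u * x)
      (s := fun _ => (Set.univ : Set ℝ)) (K := ⟨M, hM0⟩) (fun u _ => hlip u) hCcont
      (fun u hu => by
        show HasDerivWithinAt C (c u * C u) (Set.Iic u) u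
        rw [hcs u (Set.Ioc_subset_Icc_self hu)]
        exact (hCd u (hsub (Set.Ioc_subset_Icc_self hu))).hasDerivWithinAt)
      (fun _ _ => Set.mem_univ _)
      (continuousOn_const (c := (0:ℝ)))
      (fun u hu => by simpa using (hasDerivWithinAt_const u (Set.Iic u) (0:ℝ)))
      (fun _ _ => Set.mem_univ _)
      (by simpa using hC0)
    have := this (Set.left_mem_Icc.mpr hle)
    simpa using this
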